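/- Failure of the total-force matching condition for overlapping contributions: let N ≥ 2 and ζ ∈ ℝ^{2×N} with ζ_{1j} ≠ 0 for all j and Σ_{j=1}^N ζ_{1j} = 1, and with ζ_{21} = 1 and ζ_{2j} = 0 for j ≥ 2 (so particle 1 contributes to both coarse-grained sites). Let T ∈ ℝ^{6×3N} have entries T_{(i,a),(j,b)} = ζ_{ij} δ_{ab}, and let B ∈ ℝ^{6×3N} be the indicator block matrix with entries B_{(i,a),(j,b)} = δ_{ab} if ζ_{ij} ≠ 0 and 0 otherwise. Then det(I_{3N} − Tᵗ B) ≠ 0; consequently the only W ∈ ℝ^{6×3N} with W(I_{3N} − TᵗB) = 0 is W = 0, so no weight matrix W with W Tᵗ invertible yields (W Tᵗ)⁻¹ W f(x) equal to the per-site total forces B f(x) for all f. -/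

import Mathlib

open Matrix

open Kronecker


lemma core_right_inv {N : ℕ} (hN : 0 < N) (u : Fin N → ℝ)
    (hc : u ⟨0, hN⟩ ≠ 0) (hs : ∑ j, u j = 1) :
    (Matrix.of fun j k : Fin N =>
        (if j = k then (1:ℝ) else 0) - u j -
          (if j = ⟨0, hN⟩ then 1 else 0) * (if k = ⟨0, hN⟩ then 1 else 0)) *
      (Matrix.of fun k l : Fin N =>
        (if k = l then (1:ℝ) else 0) - (u k / u ⟨0, hN⟩) * (if l = ⟨0, hN⟩ then 1 else 0) -
          (if k = ⟨0, hN⟩ then 1 else 0)) = 1 := by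
  set z : Fin N := ⟨0, hN⟩ with hz
  ext j l
  rw [Matrix.mul_apply]
  simp only [Matrix.of_apply]
  have expand : ∀ k : Fin N,
      ((if j = k then (1:ℝ) else 0) - u j -
          (if j = z then 1 else 0) * (if k = z then 1 else 0)) *
        ((if k = l then (1:ℝ) else 0) - (u k / u z) * (if l = z then 1 else 0) -
          (if k = z then 1 else 0))
      = (if j = k then (1:ℝ) else 0) * ((if k = l then (1:ℝ) else 0)
            - (u k / u z) * (if l = z then 1 else 0) - (if k = z then 1 else 0))
        - u j * (if k = l then (1:ℝ) else 0)
        + (u j * (if l = z then 1 else 0) / u z) * u k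
        + u j * (if k = z then 1 else 0)
        - ((if j = z then 1 else 0) * (if k = z then 1 else 0)) * (if k = l then (1:ℝ) else 0)
        + ((if j = z then 1 else 0) * ((if l = z then 1 else 0) / u z)) * ((if k = z then 1 else 0) * u k)
        + ((if j = z then 1 else 0)) * ((if k = z then 1 else 0) * (if k = z then 1 else 0)) := by
    intro k; ring
  rw [Finset.sum_congr rfl (fun k _ => expand k)]
  simp only [Finset.sum_add_distrib, Finset.sum_sub_distrib]
  have S1 : ∑ k : Fin N, (if j = k then (1:ℝ) else 0) *
      ((if k = l then (1:ℝ) else 0) - (u k / u z) * (if l = z then 1 else 0)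
        - (if k = z then 1 else 0))
      = (if j = l then (1:ℝ) else 0) - (u j / u z) * (if l = z then 1 else 0)
        - (if j = z then 1 else 0) := by
    rw [Finset.sum_eq_single j]
    · simp
    · intro k _ hk; simp [Ne.symm hk]
    · simp
  have S2 : ∑ k : Fin N, u j * (if k = l then (1:ℝ) else 0) = u j := by
    rw [← Finset.mul_sum]; simp
  have S3 : ∑ k : Fin N, (u j * (if l = z then 1 else 0) / u z) * u k
      = u j * (if l = z then 1 else 0) / u z := by
    rw [← Finset.mul_sum, hs, mul_one]
  have S4 : ∑ k : Fin N, u j * (if k = z then (1:ℝ) else 0) = u j := by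
    rw [← Finset.mul_sum]; simp
  have S5 : ∑ k : Fin N, ((if j = z then (1:ℝ) else 0) * (if k = z then 1 else 0)) *
      (if k = l then (1:ℝ) else 0) = (if j = z then 1 else 0) * (if z = l then 1 else 0) := by
    rw [Finset.sum_eq_single z]
    · simp
    · intro k _ hk; simp [hk]
    · simp
  have S6 : ∑ k : Fin N, ((if j = z then (1:ℝ) else 0) * ((if l = z then 1 else 0) / u z)) *
      ((if k = z then (1:ℝ) else 0) * u k)
      = (if j = z then (1:ℝ) else 0) * ((if l = z then 1 else 0) / u z) * u z := by
    rw [← Finset.mul_sum, Finset.sum_eq_single z]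
    · simp
    · intro k _ hk; simp [hk]
    · simp
  have S7 : ∑ k : Fin N, (if j = z then (1:ℝ) else 0) *
      ((if k = z then (1:ℝ) else 0) * (if k = z then 1 else 0))
      = (if j = z then (1:ℝ) else 0) := by
    rw [← Finset.mul_sum, Finset.sum_eq_single z]
    · simp
    · intro k _ hk; simp [hk]
    · simp
  rw [S1, S2, S3, S4, S5, S6, S7]
  rw [Matrix.one_apply]
  clear expand S1 S2 S3 S4 S5 S6 S7 hs hz
  split_ifs <;> (try subst_vars) <;> (try simp_all) <;> (try (field_simp; ring))


/-- Failure of the total-force matching condition for overlapping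
contributions: if `ζ_{1j} ≠ 0` for all `j` with `Σ_j ζ_{1j} = 1`, and `ζ_{21} = 1`,
`ζ_{2j} = 0` for `j ≥ 2` (particle 1 contributes to both sites), then
`det(I_{3N} − Tᵗ B) ≠ 0`, the only solution of `W(I_{3N} − Tᵗ B) = 0` is `W = 0`,
and no `W` with `W Tᵗ` invertible yields `(W Tᵗ)⁻¹ W f = B f` for all `f`. -/
theorem overlapping_forceMatching_incompatibility
    {N : ℕ} (hN : 2 ≤ N) (ζ : Fin 2 → Fin N → ℝ)
    (h1ne : ∀ j, ζ 0 j ≠ 0) (h1sum : ∑ j, ζ 0 j = 1)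
    (h21 : ∀ j : Fin N, j = ⟨0, by omega⟩ → ζ 1 j = 1)
    (h2j : ∀ j : Fin N, j ≠ ⟨0, by omega⟩ → ζ 1 j = 0)
    (T B : Matrix (Fin 2 × Fin 3) (Fin N × Fin 3) ℝ)
    (hT : ∀ (i : Fin 2) (a : Fin 3) (j : Fin N) (b : Fin 3),
      T (i, a) (j, b) = ζ i j * (if a = b then 1 else 0))
    (hB : ∀ (i : Fin 2) (a : Fin 3) (j : Fin N) (b : Fin 3),
      B (i, a) (j, b) = if ζ i j ≠ 0 ∧ a = b then 1 else 0) :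
    (1 - Tᵀ * B).det ≠ 0 ∧
      (∀ W : Matrix (Fin 2 × Fin 3) (Fin N × Fin 3) ℝ,
        W * (1 - Tᵀ * B) = 0 → W = 0) ∧
      ¬∃ W : Matrix (Fin 2 × Fin 3) (Fin N × Fin 3) ℝ,
        IsUnit (W * Tᵀ) ∧
        ∀ f : Fin N × Fin 3 → ℝ,
          ((W * Tᵀ)⁻¹ * W).mulVec f = B.mulVec f := by
  have hN0 : 0 < N := by omega
  set z : Fin N := ⟨0, hN0⟩ with hzdef
  have hz21 : ζ 1 z = 1 := h21 z rfl
  have hζ1 : ∀ k, ζ 1 k = if k = z then 1 else 0 := by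
    intro k
    by_cases hk : k = z
    · simpa [hk] using h21 k hk
    · simpa [hk] using h2j k hk
  set A : Matrix (Fin N) (Fin N) ℝ := Matrix.of fun j k : Fin N =>
      (if j = k then (1:ℝ) else 0) - ζ 0 j -
        (if j = z then 1 else 0) * (if k = z then 1 else 0) with hA
  set A' : Matrix (Fin N) (Fin N) ℝ := Matrix.of fun k l : Fin N =>
      (if k = l then (1:ℝ) else 0) - (ζ 0 k / ζ 0 z) * (if l = z then 1 else 0) -
        (if k = z then 1 else 0) with hA'
  have hAA' : A * A' = 1 := core_right_inv hN0 (ζ 0) (h1ne z) h1sum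
  -- factorization
  have hfact : 1 - Tᵀ * B = A ⊗ₖ (1 : Matrix (Fin 3) (Fin 3) ℝ) := by
    ext ⟨j, b⟩ ⟨k, c⟩
    have inner : ∀ i : Fin 2,
        ∑ a : Fin 3, Tᵀ (j, b) (i, a) * B (i, a) (k, c)
          = ζ i j * ((if ζ i k ≠ 0 then 1 else 0) * (if b = c then 1 else 0)) := by
      intro i
      rw [Finset.sum_eq_single b]
      · rw [Matrix.transpose_apply, hT, hB]
        by_cases hbc : b = c <;> by_cases hik : ζ i k ≠ 0 <;>
          simp [hbc, hik, and_comm]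
      · intro a _ ha
        rw [Matrix.transpose_apply, hT]
        simp [ha]
      · simp
    rw [Matrix.sub_apply, Matrix.mul_apply, Fintype.sum_prod_type, Fin.sum_univ_two,
      inner 0, inner 1, Matrix.one_apply, Matrix.kroneckerMap_apply]
    have h0k : (if ζ 0 k ≠ 0 then (1:ℝ) else 0) = 1 := by simp [h1ne k]
    have h1k : (if ζ 1 k ≠ 0 then (1:ℝ) else 0) = if k = z then 1 else 0 := by
      by_cases hk : k = z
      · simp [hζ1, hk]
      · simp [hζ1, hk]
    rw [h0k, h1k, hζ1 j]
    simp only [hA, Matrix.of_apply, Matrix.one_apply, Prod.mk.injEq]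
    by_cases hjk : j = k <;> by_cases hbc : b = c <;> by_cases hjz : j = z <;>
      by_cases hkz : k = z <;> simp_all
  have hright : (1 - Tᵀ * B) * (A' ⊗ₖ (1 : Matrix (Fin 3) (Fin 3) ℝ)) = 1 := by
    rw [hfact, ← Matrix.mul_kronecker_mul, hAA', Matrix.one_mul,
      Matrix.one_kronecker_one]
  have hdet : (1 - Tᵀ * B).det ≠ 0 := by
    have h := congrArg Matrix.det hright
    rw [Matrix.det_mul, Matrix.det_one] at h
    exact left_ne_zero_of_mul_eq_one h
  have hW0 : ∀ W : Matrix (Fin 2 × Fin 3) (Fin N × Fin 3) ℝ,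
      W * (1 - Tᵀ * B) = 0 → W = 0 := by
    intro W hW
    calc W = W * ((1 - Tᵀ * B) * (A' ⊗ₖ (1 : Matrix (Fin 3) (Fin 3) ℝ))) := by
            rw [hright, Matrix.mul_one]
      _ = (W * (1 - Tᵀ * B)) * (A' ⊗ₖ (1 : Matrix (Fin 3) (Fin 3) ℝ)) := by
            rw [Matrix.mul_assoc]
      _ = 0 := by rw [hW, Matrix.zero_mul]
  refine ⟨hdet, hW0, ?_⟩
  rintro ⟨W, hU, hf⟩
  have hmat : (W * Tᵀ)⁻¹ * W = B := by
    ext i p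
    have h := congrFun (hf (Pi.single p 1)) i
    simpa [Matrix.mulVec_single] using h
  have h1 : (W * Tᵀ) * B = W := by
    rw [← hmat, ← Matrix.mul_assoc,
      Matrix.mul_nonsing_inv _ ((Matrix.isUnit_iff_isUnit_det _).mp hU),
      Matrix.one_mul]
  have h2 : W * (1 - Tᵀ * B) = 0 := by
    rw [Matrix.mul_sub, Matrix.mul_one, ← Matrix.mul_assoc, h1, sub_self]
  have hW : W = 0 := hW0 W h2
  rw [hW, Matrix.zero_mul] at hU
  exact not_isUnit_zero hU
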